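/- Let X be a real normed space equipped with a partial order whose positive cone X⁺ = {x ∈ X : x ≥ 0} is closed under addition and under multiplication by nonnegative scalars, and suppose that ‖x‖ ≤ ‖x + y‖ whenever x, y ∈ X⁺. If X⁺ contains a sequence (u_n) with ‖u_n‖ = 1 for all n and u_n → 0 weakly, then for every convex function g defined on B_X⁺ \ {0} = {x ∈ X⁺ : 0 < ‖x‖ ≤ 1} one has sup_{x ∈ B_X⁺ \ {0}} | −log₂‖x‖ − g(x) | = ∞. -/
import Mathlib

/-- On an ordered real normed space whose positive cone is closed under addition and
nonnegative scalar multiplication, with monotone norm on the cone: if the cone contains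
a weakly null normalized sequence, then `x ↦ -log₂ ‖x‖` is at infinite uniform distance
from every convex function on the punctured positive part of the unit ball. -/
theorem stmt_4 {X : Type*} [NormedAddCommGroup X] [NormedSpace ℝ X] [PartialOrder X]
    (hadd : ∀ x y : X, 0 ≤ x → 0 ≤ y → 0 ≤ x + y)
    (hsmul : ∀ (t : ℝ) (x : X), 0 ≤ t → 0 ≤ x → 0 ≤ t • x)
    (hnorm : ∀ x y : X, 0 ≤ x → 0 ≤ y → ‖x‖ ≤ ‖x + y‖)
    (u : ℕ → X) (hu_pos : ∀ n, 0 ≤ u n) (hu_norm : ∀ n, ‖u n‖ = 1)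
    (hu_weak : ∀ φ : X →L[ℝ] ℝ,
      Filter.Tendsto (fun n => φ (u n)) Filter.atTop (nhds 0)) :
    ∀ g : X → ℝ,
      (∀ x, (0 ≤ x ∧ x ≠ 0 ∧ ‖x‖ ≤ 1) → ∀ y, (0 ≤ y ∧ y ≠ 0 ∧ ‖y‖ ≤ 1) →
        ∀ t : ℝ, 0 ≤ t → t ≤ 1 →
          g (t • x + (1 - t) • y) ≤ t * g x + (1 - t) * g y) →
      ∀ C : ℝ, ∃ x : X, (0 ≤ x ∧ x ≠ 0 ∧ ‖x‖ ≤ 1) ∧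
        C < |(-Real.logb 2 ‖x‖) - g x| := by
  intro g hg C
  by_contra hcon
  push_neg at hcon
  set S : Set X := {x | 0 ≤ x ∧ x ≠ 0 ∧ ‖x‖ ≤ 1} with hSdef
  -- S is convex
  have hconv : Convex ℝ S := by
    rintro x ⟨hx0, hxne, hx1⟩ y ⟨hy0, hyne, hy1⟩ a b ha hb hab
    refine ⟨hadd _ _ (hsmul a x ha hx0) (hsmul b y hb hy0), ?_, ?_⟩
    · rcases eq_or_lt_of_le ha with h0 | hapos
      · have hb1 : b = 1 := by linarith
        simp [← h0, hb1, hyne]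
      · intro hz
        have h1 : ‖a • x‖ ≤ ‖a • x + b • y‖ :=
          hnorm _ _ (hsmul a x ha hx0) (hsmul b y hb hy0)
        rw [hz, norm_zero, norm_smul, Real.norm_of_nonneg ha] at h1
        have hxpos : 0 < ‖x‖ := norm_pos_iff.mpr hxne
        nlinarith
    · calc ‖a • x + b • y‖ ≤ ‖a • x‖ + ‖b • y‖ := norm_add_le _ _
        _ = a * ‖x‖ + b * ‖y‖ := by
            rw [norm_smul, norm_smul, Real.norm_of_nonneg ha, Real.norm_of_nonneg hb]
        _ ≤ a * 1 + b * 1 := by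
            gcongr
        _ = 1 := by linarith
  have hgconv : ConvexOn ℝ S g := by
    refine ⟨hconv, fun x hx y hy a b ha hb hab => ?_⟩
    have h := hg x hx y hy a ha (by linarith)
    have hb' : (1:ℝ) - a = b := by linarith
    rwa [hb'] at h
  -- Mazur: small norm convex combinations
  have hmazur : ∀ ε : ℝ, 0 < ε → ∃ v ∈ convexHull ℝ (Set.range u), ‖v‖ < ε := by
    intro ε hε
    by_contra hm
    push_neg at hm
    have h0 : (0:X) ∉ closure (convexHull ℝ (Set.range u)) := by
      intro h0
      rcases Metric.mem_closure_iff.mp h0 ε hε with ⟨v, hv, hd⟩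
      rw [dist_comm, dist_zero_right] at hd
      exact absurd hd (not_lt.2 (hm v hv))
    obtain ⟨f, s, hfs, hs0⟩ := geometric_hahn_banach_closed_point
      ((convex_convexHull ℝ _).closure) isClosed_closure h0
    have hs : s < 0 := by simpa using hs0
    have hev : ∀ᶠ n in Filter.atTop, s < f (u n) :=
      (hu_weak f).eventually (eventually_gt_nhds hs)
    obtain ⟨n, hn⟩ := hev.exists
    exact absurd (hfs _ (subset_closure (subset_convexHull ℝ _ ⟨n, rfl⟩))) (not_lt.2 hn.le)
  -- pick a small convex combination
  obtain ⟨v, hvhull, hvnorm⟩ := hmazur ((2:ℝ) ^ (-(2*C) - 1)) (Real.rpow_pos_of_pos two_pos _)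
  have hrange : Set.range u ⊆ S := by
    rintro _ ⟨n, rfl⟩
    refine ⟨hu_pos n, fun h => ?_, le_of_eq (hu_norm n)⟩
    have h1 := hu_norm n
    rw [h, norm_zero] at h1
    exact zero_ne_one h1
  have hvS : v ∈ S := hconv.convexHull_eq ▸ convexHull_mono hrange hvhull
  -- g v ≤ C
  have hgC : ∀ x ∈ Set.range u, g x ≤ C := by
    rintro _ ⟨n, rfl⟩
    have h := hcon (u n) (hrange ⟨n, rfl⟩)
    rw [hu_norm n, Real.logb_one] at h
    have := abs_le.mp h
    linarith [this.1]
  have hgv : g v ≤ C := by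
    rw [convexHull_eq] at hvhull
    obtain ⟨ι, t, w, z, hw0, hw1, hz, hvz⟩ := hvhull
    have hzS : ∀ i ∈ t, z i ∈ S := fun i hi => hrange (hz i hi)
    have hj := hgconv.map_centerMass_le hw0 (by rw [hw1]; norm_num) hzS
    rw [hvz] at hj
    refine hj.trans ?_
    rw [Finset.centerMass, hw1, inv_one, one_smul]
    calc ∑ i ∈ t, w i • (g ∘ z) i ≤ ∑ i ∈ t, w i * C := by
          refine Finset.sum_le_sum fun i hi => ?_
          exact mul_le_mul_of_nonneg_left (hgC (z i) (hz i hi)) (hw0 i hi)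
      _ = C := by rw [← Finset.sum_mul, hw1, one_mul]
  -- from hcon at v: ‖v‖ ≥ 2^(-2C)
  have hv := hcon v hvS
  have hf : -Real.logb 2 ‖v‖ ≤ g v + C := by
    have := abs_le.mp hv; linarith [this.2]
  have hlogb : -(2*C) ≤ Real.logb 2 ‖v‖ := by linarith
  have hvpos : 0 < ‖v‖ := norm_pos_iff.mpr hvS.2.1
  have hge : (2:ℝ) ^ (-(2*C)) ≤ ‖v‖ := by
    calc (2:ℝ) ^ (-(2*C)) ≤ (2:ℝ) ^ (Real.logb 2 ‖v‖) :=
          Real.rpow_le_rpow_of_exponent_le one_le_two hlogb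
      _ = ‖v‖ := Real.rpow_logb two_pos (by norm_num) hvpos
  have hlt : (2:ℝ) ^ (-(2*C) - 1) < (2:ℝ) ^ (-(2*C)) :=
    Real.rpow_lt_rpow_of_exponent_lt one_lt_two (by linarith)
  linarith
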